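/- Let N be a C^{ℵ0}I-net on O and M a finite multiset. For each statement c ∈ N that is meaningful w.r.t. M, there exists a statement c' (with the same comparison expressions P_1, P_2 and a rewritten precondition using only constraints of the forms o ≥ a and o ≤ b) that is equivalent to c for M, i.e., a multiset M' satisfies the precondition of c' if and only if M' ⊨ P^+, M'[P_1] ⊆ M and M'[P_2] ⊆ M. -/
import Mathlib


variable {O : Type*} [Fintype O] [DecidableEq O]

/-- A strict partial order: irreflexive, asymmetric, transitive. -/
def IsPrefRel {α : Type*} (r : α → α → Prop) : Prop :=
  (∀ a, ¬ r a a) ∧ (∀ a b, r a b → ¬ r b a) ∧ (∀ a b c, r a b → r b c → r a c)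

/-- Monotonicity on subsets of `O`: a strict superset is strictly preferred. -/
def Monotonic (r : Finset O → Finset O → Prop) : Prop :=
  ∀ a b : Finset O, b ⊂ a → r a b

/-- A CI-statement `S⁺, S⁻ : S₁ ▷ S₂` on `O`. -/
structure CIStmt (O : Type*) [DecidableEq O] where
  sp : Finset O
  sm : Finset O
  s1 : Finset O
  s2 : Finset O
  h1 : s1.Nonempty
  h2 : s2.Nonempty
  dpm : Disjoint sp sm
  dp1 : Disjoint sp s1
  dp2 : Disjoint sp s2
  dm1 : Disjoint sm s1
  dm2 : Disjoint sm s2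
  d12 : Disjoint s1 s2

/-- `r` satisfies a CI-statement. -/
def SatStmt (r : Finset O → Finset O → Prop) (c : CIStmt O) : Prop :=
  ∀ S' : Finset O, S' ⊆ Finset.univ \ (c.sp ∪ c.sm ∪ c.s1 ∪ c.s2) →
    r (S' ∪ c.sp ∪ c.s1) (S' ∪ c.sp ∪ c.s2)

/-- `r` satisfies a CI-net: monotone and satisfies each statement. -/
def SatNet (r : Finset O → Finset O → Prop) (N : Set (CIStmt O)) : Prop :=
  Monotonic r ∧ ∀ c ∈ N, SatStmt r c

/-- A CI-net is satisfiable. -/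
def CISatisfiable (N : Set (CIStmt O)) : Prop :=
  ∃ r : Finset O → Finset O → Prop, IsPrefRel r ∧ SatNet r N

/-- CI-flip with respect to `N`. -/
def CIFlip (N : Set (CIStmt O)) (a b : Finset O) : Prop :=
  ∃ c ∈ N, ∃ S' ⊆ Finset.univ \ (c.sp ∪ c.sm ∪ c.s1 ∪ c.s2),
    a = S' ∪ c.sp ∪ c.s1 ∧ b = S' ∪ c.sp ∪ c.s2

/-- Worsening flip: a `⊃`-flip or a CI-flip. -/
def WFlip (N : Set (CIStmt O)) (a b : Finset O) : Prop :=
  b ⊂ a ∨ CIFlip N a b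

/-- The intersection of all preference relations satisfying `N`. -/
def Induced (N : Set (CIStmt O)) (a b : Finset O) : Prop :=
  ∀ r : Finset O → Finset O → Prop, IsPrefRel r ∧ SatNet r N → r a b

/-- A comparison relation symbol for multiplicity constraints. -/
inductive CRel
  | ge
  | le
  | eq

/-- A simple multiplicity constraint `o R a`. -/
structure Constraint (O : Type*) where
  obj : O
  rel : CRel
  bound : ℕ

/-- A multiset satisfies a constraint. -/
def Constraint.Holds {O : Type*} [DecidableEq O] (c : Constraint O) (M : Multiset O) : Prop :=
  match c.rel with
  | .ge => c.bound ≤ M.count c.obj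
  | .le => M.count c.obj ≤ c.bound
  | .eq => M.count c.obj = c.bound

/-- A `C^{ℵ₀}I`-statement `P⁺ : P₁ ▷ P₂`: a finite conjunction of constraints
as precondition and two update patterns (nonzero multisets with disjoint
supports). -/
structure CAIStmt (O : Type*) where
  pre : List (Constraint O)
  p1 : Multiset O
  p2 : Multiset O
  h1 : p1 ≠ 0
  h2 : p2 ≠ 0
  hd : ∀ a ∈ p1, a ∉ p2

/-- A multiset satisfies the precondition of a statement. -/
def SatPre {O : Type*} [DecidableEq O] (M : Multiset O) (c : CAIStmt O) : Prop :=
  ∀ con ∈ c.pre, con.Holds M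

/-- Monotonicity on finite multisets over `O`. -/
def MonotonicM {O : Type*} (r : Multiset O → Multiset O → Prop) : Prop :=
  ∀ a b : Multiset O, b < a → r a b

/-- `r` satisfies a `C^{ℵ₀}I`-statement. -/
def SatCAIStmt {O : Type*} [DecidableEq O] (r : Multiset O → Multiset O → Prop)
    (c : CAIStmt O) : Prop :=
  ∀ M' : Multiset O, SatPre M' c → r (M' + c.p1) (M' + c.p2)

/-- `r` satisfies a `C^{ℵ₀}I`-net. -/
def SatCAINet {O : Type*} [DecidableEq O] (r : Multiset O → Multiset O → Prop)
    (N : Set (CAIStmt O)) : Prop :=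
  MonotonicM r ∧ ∀ c ∈ N, SatCAIStmt r c

/-- Satisfiability of a `C^{ℵ₀}I`-net. -/
def CAISatisfiable {O : Type*} [DecidableEq O] (N : Set (CAIStmt O)) : Prop :=
  ∃ r : Multiset O → Multiset O → Prop, IsPrefRel r ∧ SatCAINet r N

/-- CI-flip for a `C^{ℵ₀}I`-net. -/
def CAIFlipCI {O : Type*} [DecidableEq O] (N : Set (CAIStmt O))
    (a b : Multiset O) : Prop :=
  ∃ c ∈ N, ∃ M' : Multiset O, SatPre M' c ∧ a = M' + c.p1 ∧ b = M' + c.p2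

/-- Worsening flip for a `C^{ℵ₀}I`-net. -/
def CAIWFlip {O : Type*} [DecidableEq O] (N : Set (CAIStmt O))
    (a b : Multiset O) : Prop :=
  b < a ∨ CAIFlipCI N a b

/-- The intersection of all preference relations satisfying `N`. -/
def CAIInduced {O : Type*} [DecidableEq O] (N : Set (CAIStmt O))
    (a b : Multiset O) : Prop :=
  ∀ r : Multiset O → Multiset O → Prop, IsPrefRel r ∧ SatCAINet r N → r a b

/-- A worsening flip confined to the multiset `M`. -/
def ConfFlip {O : Type*} [DecidableEq O] (N : Set (CAIStmt O)) (M : Multiset O)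
    (a b : Multiset O) : Prop :=
  CAIWFlip N a b ∧ a ≤ M ∧ b ≤ M

/-- reinterpretation of a meaningful statement w.r.t. `M`: there
is a precondition using only `≥`/`≤` constraints whose satisfying multisets are
exactly those `M'` with `M' ⊨ P⁺`, `M'[P₁] ⊆ M` and `M'[P₂] ⊆ M`. -/
theorem stmt_19 (N : Set (CAIStmt O)) (hfin : N.Finite) (M : Multiset O)
    (c : CAIStmt O) (hc : c ∈ N)
    (hmean : ∃ M' : Multiset O, SatPre M' c ∧ M' + c.p1 ≤ M ∧ M' + c.p2 ≤ M) :
    ∃ pre' : List (Constraint O),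
      (∀ con ∈ pre', con.rel = CRel.ge ∨ con.rel = CRel.le) ∧
      ∀ M' : Multiset O,
        (∀ con ∈ pre', con.Holds M') ↔
          (SatPre M' c ∧ M' + c.p1 ≤ M ∧ M' + c.p2 ≤ M) := by
  classical
  obtain ⟨M0, _, hM1, hM2⟩ := hmean
  have hp1 : c.p1 ≤ M := le_trans (le_add_self) hM1
  have hp2 : c.p2 ≤ M := le_trans (le_add_self) hM2
  set f : Constraint O → List (Constraint O) := fun con =>
    match con.rel with
    | .eq => [⟨con.obj, .ge, con.bound⟩, ⟨con.obj, .le, con.bound⟩]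
    | _ => [con] with hf
  set L1 : List (Constraint O) :=
    Finset.univ.toList.map (fun o => ⟨o, .le, M.count o - c.p1.count o⟩) with hL1
  set L2 : List (Constraint O) :=
    Finset.univ.toList.map (fun o => ⟨o, .le, M.count o - c.p2.count o⟩) with hL2
  refine ⟨c.pre.flatMap f ++ L1 ++ L2, ?_, ?_⟩
  · intro con hcon
    simp only [List.mem_append, List.mem_flatMap, hL1, hL2, List.mem_map] at hcon
    rcases hcon with (⟨con0, _, hmem⟩ | ⟨o, _, rfl⟩) | ⟨o, _, rfl⟩
    · rcases hr : con0.rel with _ | _ | _ <;>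
        simp [hf, hr] at hmem <;>
        first
          | (rcases hmem with rfl | rfl <;> simp)
          | (subst hmem; simp [hr])
    · right; rfl
    · right; rfl
  · intro M'
    constructor
    · intro h
      refine ⟨?_, ?_, ?_⟩
      · intro con hcon
        rcases hr : con.rel with _ | _ | _
        · have := h con (by
            simp only [List.mem_append, List.mem_flatMap]
            exact Or.inl (Or.inl ⟨con, hcon, by simp [hf, hr]⟩))
          exact this
        · have := h con (by
            simp only [List.mem_append, List.mem_flatMap]
            exact Or.inl (Or.inl ⟨con, hcon, by simp [hf, hr]⟩))
          exact this
        · have hge := h ⟨con.obj, .ge, con.bound⟩ (by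
            simp only [List.mem_append, List.mem_flatMap]
            exact Or.inl (Or.inl ⟨con, hcon, by simp [hf, hr]⟩))
          have hle := h ⟨con.obj, .le, con.bound⟩ (by
            simp only [List.mem_append, List.mem_flatMap]
            exact Or.inl (Or.inl ⟨con, hcon, by simp [hf, hr]⟩))
          simp only [Constraint.Holds] at hge hle ⊢
          rw [hr]
          exact le_antisymm hle hge
      · rw [Multiset.le_iff_count]
        intro o
        have := h ⟨o, .le, M.count o - c.p1.count o⟩ (by
          simp only [List.mem_append, hL1, List.mem_map]
          exact Or.inl (Or.inr ⟨o, by simp, rfl⟩))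
        simp only [Constraint.Holds] at this
        rw [Multiset.count_add]
        have hb : c.p1.count o ≤ M.count o := Multiset.le_iff_count.mp hp1 o
        omega
      · rw [Multiset.le_iff_count]
        intro o
        have := h ⟨o, .le, M.count o - c.p2.count o⟩ (by
          simp only [List.mem_append, hL2, List.mem_map]
          exact Or.inr ⟨o, by simp, rfl⟩)
        simp only [Constraint.Holds] at this
        rw [Multiset.count_add]
        have hb : c.p2.count o ≤ M.count o := Multiset.le_iff_count.mp hp2 o
        omega
    · rintro ⟨hpre, h1, h2⟩ con hcon
      simp only [List.mem_append, List.mem_flatMap, hL1, hL2, List.mem_map] at hcon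
      rcases hcon with (⟨con0, hcon0, hmem⟩ | ⟨o, _, rfl⟩) | ⟨o, _, rfl⟩
      · have hh := hpre con0 hcon0
        rcases hr : con0.rel with _ | _ | _ <;> simp [hf, hr] at hmem
        · subst hmem; exact hh
        · subst hmem; exact hh
        · simp only [Constraint.Holds, hr] at hh
          rcases hmem with rfl | rfl <;> simp [Constraint.Holds, hh]
      · have := Multiset.le_iff_count.mp h1 o
        rw [Multiset.count_add] at this
        simp only [Constraint.Holds]
        omega
      · have := Multiset.le_iff_count.mp h2 o
        rw [Multiset.count_add] at this
        simp only [Constraint.Holds]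
        omega
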